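/- Let $\Theta(z)$ be an $m\times m$ matrix with holomorphic entries near the origin in $\mathbb{C}^n$ that is generically of full rank ($\det\Theta\not\equiv 0$). Then there exists an $m\times m$ matrix $Q(z)$ of polynomials such that $N(z):=Q(z)\cdot\Theta(z)$ has the property that the matrix $N_0$ formed from $N$ by taking the lowest-order homogeneous terms in each row is generically of full rank, i.e. $\det N_0\not\equiv 0$. -/

import Mathlib

noncomputable def homComp {n : ℕ} (m : ℕ) (F : MvPowerSeries (Fin n) ℂ) :
    MvPolynomial (Fin n) ℂ :=
  ∑ a ∈ Finset.Nat.antidiagonalTuple n m,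
    MvPolynomial.monomial (Finsupp.equivFunOnFinite.symm a)
      (MvPowerSeries.coeff (Finsupp.equivFunOnFinite.symm a) F)

/-- A polynomial viewed as a formal power series. -/
noncomputable def polyPS {n : ℕ} (p : MvPolynomial (Fin n) ℂ) : MvPowerSeries (Fin n) ℂ :=
  MvPolynomial.aeval (fun i => (MvPowerSeries.X i : MvPowerSeries (Fin n) ℂ)) p

/-- The order of vanishing of the \`j\`-th row of a matrix of formal power series. -/
noncomputable def rowOrder {n m : ℕ} (N : Matrix (Fin m) (Fin m) (MvPowerSeries (Fin n) ℂ))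
    (j : Fin m) : ℕ :=
  sInf {d | ∃ i, homComp d (N j i) ≠ 0}

lemma polyPS_eq_coe {n : ℕ} (p : MvPolynomial (Fin n) ℂ) :
    polyPS p = (p : MvPowerSeries (Fin n) ℂ) := by
  have h : (MvPolynomial.aeval fun i => (MvPowerSeries.X i : MvPowerSeries (Fin n) ℂ)) =
      (MvPolynomial.coeToMvPowerSeries.algHom ℂ :
        MvPolynomial (Fin n) ℂ →ₐ[ℂ] MvPowerSeries (Fin n) ℂ) := by
    apply MvPolynomial.algHom_ext
    intro i
    simp [MvPolynomial.coeToMvPowerSeries.algHom_apply, MvPolynomial.coe_X]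
  unfold polyPS
  rw [h]
  simp [MvPolynomial.coeToMvPowerSeries.algHom_apply]

lemma coeff_polyPS {n : ℕ} (p : MvPolynomial (Fin n) ℂ) (b : Fin n →₀ ℕ) :
    MvPowerSeries.coeff b (polyPS p) = MvPolynomial.coeff b p := by
  rw [polyPS_eq_coe, MvPolynomial.coeff_coe]

lemma coeff_homComp {n : ℕ} (e : ℕ) (F : MvPowerSeries (Fin n) ℂ) (b : Fin n →₀ ℕ) :
    MvPolynomial.coeff b (homComp e F) =
      if (∑ i, b i) = e then MvPowerSeries.coeff b F else 0 := by
  unfold homComp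
  rw [MvPolynomial.coeff_sum]
  by_cases hb : (∑ i, b i) = e
  · rw [if_pos hb, Finset.sum_eq_single (⇑b)]
    · simp [MvPolynomial.coeff_monomial]
    · intro a ha hne
      rw [MvPolynomial.coeff_monomial, if_neg]
      intro h
      apply hne
      have := congrArg (⇑Finsupp.equivFunOnFinite) h
      exact (by simpa using this : a = Finsupp.equivFunOnFinite b)
    · intro h
      exact absurd (Finset.Nat.mem_antidiagonalTuple.mpr hb) h
  · rw [if_neg hb]
    refine Finset.sum_eq_zero fun a ha => ?_
    rw [MvPolynomial.coeff_monomial, if_neg]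
    intro h
    apply hb
    rw [← h]
    have := Finset.Nat.mem_antidiagonalTuple.mp ha
    simpa using this

lemma homComp_congr {n : ℕ} {e : ℕ} {F G : MvPowerSeries (Fin n) ℂ}
    (h : ∀ b : Fin n →₀ ℕ, (∑ i, b i) = e →
      MvPowerSeries.coeff b F = MvPowerSeries.coeff b G) :
    homComp e F = homComp e G := by
  apply MvPolynomial.ext
  intro b
  rw [coeff_homComp, coeff_homComp]
  split_ifs with hb
  · exact h b hb
  · rfl

lemma homComp_zero {n : ℕ} (e : ℕ) : homComp e (0 : MvPowerSeries (Fin n) ℂ) = 0 := by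
  simp [homComp]

/-- for a generically invertible matrix `Θ` of holomorphic germs there is a
polynomial matrix `Q` such that the matrix of lowest-order homogeneous row terms of
`N = Q ⬝ Θ` is generically of full rank. -/
theorem stmt11 (n m : ℕ) (Θ : Matrix (Fin m) (Fin m) (MvPowerSeries (Fin n) ℂ))
    (hdet : Θ.det ≠ 0) :
    ∃ Q : Matrix (Fin m) (Fin m) (MvPolynomial (Fin n) ℂ),
      Matrix.det (Matrix.of fun j i =>
        homComp (rowOrder (Q.map polyPS * Θ) j) ((Q.map polyPS * Θ) j i)) ≠ 0 := by
  classical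
  set A := Θ.adjugate with hA
  have hSne : Set.Nonempty {e | homComp e Θ.det ≠ 0} := by
    by_contra h
    rw [Set.not_nonempty_iff_eq_empty] at h
    apply hdet
    ext a
    rw [map_zero]
    have he : homComp (∑ k, a k) Θ.det = 0 := by
      by_contra hne
      exact (Set.eq_empty_iff_forall_notMem.mp h _) hne
    have := congrArg (MvPolynomial.coeff a) he
    rw [coeff_homComp] at this
    simpa using this
  set d := sInf {e | homComp e Θ.det ≠ 0} with hdDef
  have hd : homComp d Θ.det ≠ 0 := Nat.sInf_mem hSne
  have hlow : ∀ e < d, homComp e Θ.det = 0 := by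
    intro e he
    by_contra h
    exact absurd (Nat.sInf_le h) (not_le.mpr he)
  set Q : Matrix (Fin m) (Fin m) (MvPolynomial (Fin n) ℂ) :=
    Matrix.of fun j i => ∑ e ∈ Finset.range (d + 1), homComp e (A j i) with hQ
  have h1 : ∀ (j i : Fin m) (a : Fin n →₀ ℕ), (∑ k, a k) ≤ d →
      MvPowerSeries.coeff a ((Q.map polyPS * Θ) j i) =
        MvPowerSeries.coeff a ((A * Θ) j i) := by
    intro j i a ha
    rw [Matrix.mul_apply, Matrix.mul_apply, map_sum, map_sum]
    refine Finset.sum_congr rfl fun l _ => ?_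
    rw [MvPowerSeries.coeff_mul, MvPowerSeries.coeff_mul]
    refine Finset.sum_congr rfl fun p hp => ?_
    congr 1
    rw [Matrix.map_apply, coeff_polyPS]
    have hpa := Finset.HasAntidiagonal.mem_antidiagonal.mp hp
    have hple : (∑ k, p.1 k) ≤ d := by
      refine le_trans ?_ ha
      refine Finset.sum_le_sum fun k _ => ?_
      rw [← hpa]
      simp
    simp only [hQ, Matrix.of_apply, MvPolynomial.coeff_sum, coeff_homComp]
    rw [Finset.sum_ite_eq, if_pos (Finset.mem_range.mpr (Nat.lt_succ_of_le hple))]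
  have h2 : ∀ (j i : Fin m) (e : ℕ), e ≤ d →
      homComp e ((Q.map polyPS * Θ) j i) = if j = i then homComp e Θ.det else 0 := by
    intro j i e he
    have step : homComp e ((Q.map polyPS * Θ) j i) = homComp e ((A * Θ) j i) :=
      homComp_congr fun a hae => h1 j i a (le_of_eq_of_le hae he)
    rw [step, hA, Matrix.adjugate_mul]
    by_cases hji : j = i
    · subst hji
      simp [Matrix.smul_apply, Matrix.one_apply, smul_eq_mul]
    · simp [Matrix.smul_apply, Matrix.one_apply, hji, homComp_zero]
  have hrow : ∀ j, rowOrder (Q.map polyPS * Θ) j = d := by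
    intro j
    have hdin : d ∈ {e | ∃ i, homComp e ((Q.map polyPS * Θ) j i) ≠ 0} := by
      refine ⟨j, ?_⟩
      rw [h2 j j d le_rfl, if_pos rfl]
      exact hd
    refine le_antisymm (Nat.sInf_le hdin) ?_
    refine le_csInf ⟨d, hdin⟩ ?_
    rintro e ⟨i, hei⟩
    by_contra hlt
    push_neg at hlt
    apply hei
    rw [h2 j i e hlt.le]
    split_ifs
    · exact hlow e hlt
    · rfl
  refine ⟨Q, ?_⟩
  have heq : (Matrix.of fun j i =>
      homComp (rowOrder (Q.map polyPS * Θ) j) ((Q.map polyPS * Θ) j i)) =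
      Matrix.diagonal (fun _ : Fin m => homComp d Θ.det) := by
    ext j i
    rw [Matrix.of_apply, hrow j, h2 j i d le_rfl, Matrix.diagonal_apply]
  rw [heq, Matrix.det_diagonal, Finset.prod_const]
  exact pow_ne_zero _ hd
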